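/- arXiv:1404.2334 — 5 statements merged into one kernel-verified Lean document; each statement's English description precedes it below -/
import Mathlib

section
/- For fixed x_start, x_goal and c > c_min = ‖x_start − x_goal‖, the measure λ(X_f̂(c)) = c(c²−c_min²)^((n−1)/2)ζ_n/2ⁿ tends to 0 as c → c_min⁺ (for n ≥ 2); consequently, the probability of uniformly sampling a point of X_f̂(c) from a fixed larger set X becomes arbitrarily small as the solution cost c approaches the theoretical minimum c_min. -/
open MeasureTheory Metric Filter

/-- For fixed `x_start, x_goal` with `c_min = ‖x_start − x_goal‖ > 0` and `n ≥ 2`, the measure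
of `X_f̂(c)` tends to 0 as `c → c_min⁺`; consequently the probability of uniformly sampling a
point of `X_f̂(c)` from a fixed larger set `X` of positive finite measure tends to 0. -/
theorem stmt_6 (n : ℕ) (hn : 2 ≤ n) (xstart xgoal : EuclideanSpace ℝ (Fin n)) (cmin : ℝ)
    (hmin : cmin = ‖xstart - xgoal‖) (hpos : 0 < cmin) :
    Tendsto (fun c : ℝ =>
        volume {x : EuclideanSpace ℝ (Fin n) | ‖xstart - x‖ + ‖x - xgoal‖ ≤ c})
      (nhdsWithin cmin (Set.Ioi cmin)) (nhds 0) ∧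
    ∀ X : Set (EuclideanSpace ℝ (Fin n)), volume X ≠ 0 → volume X ≠ ⊤ →
      Tendsto (fun c : ℝ =>
          volume {x : EuclideanSpace ℝ (Fin n) | ‖xstart - x‖ + ‖x - xgoal‖ ≤ c} / volume X)
        (nhdsWithin cmin (Set.Ioi cmin)) (nhds 0) := by
  set s : ℝ → Set (EuclideanSpace ℝ (Fin n)) :=
    fun c => {x | ‖xstart - x‖ + ‖x - xgoal‖ ≤ c} with hs
  -- measurability: each `s c` is closed
  have hclosed : ∀ c : ℝ, IsClosed (s c) := by
    intro c
    have : Continuous fun x : EuclideanSpace ℝ (Fin n) => ‖xstart - x‖ + ‖x - xgoal‖ := by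
      fun_prop
    exact isClosed_le this continuous_const
  -- monotonicity
  have hmono : ∀ i j : ℝ, cmin < i → i ≤ j → s i ⊆ s j := by
    intro i j _ hij x hx
    exact le_trans hx hij
  -- finiteness
  have hfin : ∃ r > cmin, volume (s r) ≠ ⊤ := by
    refine ⟨cmin + 1, by linarith, ?_⟩
    have hsub : s (cmin + 1) ⊆ closedBall xstart (cmin + 1) := by
      intro x hx
      simp only [hs, Set.mem_setOf_eq] at hx
      have h1 : ‖xstart - x‖ ≤ cmin + 1 := by
        have := norm_nonneg (x - xgoal); linarith
      simpa [mem_closedBall, dist_eq_norm, norm_sub_rev] using h1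
    exact ne_top_of_le_ne_top (measure_closedBall_lt_top).ne (measure_mono hsub)
  -- the intersection has measure zero
  have hinter : volume (⋂ r > cmin, s r) = 0 := by
    have hsub : (⋂ r > cmin, s r) ⊆ (affineSpan ℝ ({xstart, xgoal} : Set _) : Set _) := by
      intro x hx
      have hx' : ∀ r > cmin, ‖xstart - x‖ + ‖x - xgoal‖ ≤ r := by
        intro r hr
        have := Set.mem_iInter.1 hx r
        exact Set.mem_iInter.1 this hr
      have hle : ‖xstart - x‖ + ‖x - xgoal‖ ≤ cmin := by
        by_contra h
        push_neg at h
        have := hx' ((‖xstart - x‖ + ‖x - xgoal‖ + cmin) / 2) (by linarith)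
        linarith
      have hge : cmin ≤ ‖xstart - x‖ + ‖x - xgoal‖ := by
        rw [hmin]
        calc ‖xstart - xgoal‖ = ‖(xstart - x) + (x - xgoal)‖ := by abel_nf
          _ ≤ ‖xstart - x‖ + ‖x - xgoal‖ := norm_add_le _ _
      have heq : dist xstart x + dist x xgoal = dist xstart xgoal := by
        rw [dist_eq_norm, dist_eq_norm, dist_eq_norm, ← hmin]
        exact le_antisymm hle hge
      have hseg : x ∈ segment ℝ xstart xgoal := (dist_add_dist_eq_iff.1 heq).mem_segment
      exact (affineSpan ℝ ({xstart, xgoal} :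
          Set (EuclideanSpace ℝ (Fin n)))).convex.segment_subset
        (subset_affineSpan ℝ _ (by simp)) (subset_affineSpan ℝ _ (by simp)) hseg
    refine measure_mono_null hsub ?_
    apply Measure.addHaar_affineSubspace
    intro htop
    have hvs : vectorSpan ℝ ({xstart, xgoal} : Set (EuclideanSpace ℝ (Fin n))) = ⊤ := by
      have := AffineSubspace.direction_top (k := ℝ) (V := EuclideanSpace ℝ (Fin n))
        (P := EuclideanSpace ℝ (Fin n))
      rw [← htop] at this
      simpa [direction_affineSpan] using this
    rw [vectorSpan_pair] at hvs
    have h1 : Module.finrank ℝ (EuclideanSpace ℝ (Fin n)) ≤ 1 := by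
      rw [← finrank_top ℝ (EuclideanSpace ℝ (Fin n)), ← hvs]
      exact le_trans (finrank_span_le_card _) (by simp)
    rw [finrank_euclideanSpace_fin] at h1
    omega
  have hmain : Tendsto (fun c => volume (s c)) (nhdsWithin cmin (Set.Ioi cmin)) (nhds 0) := by
    have := tendsto_measure_biInter_gt (μ := volume) (a := cmin)
      (fun r _ => (hclosed r).measurableSet.nullMeasurableSet) hmono hfin
    rwa [hinter] at this
  refine ⟨hmain, fun X hX0 hXtop => ?_⟩
  have : Tendsto (fun c => volume (s c) * (volume X)⁻¹)
      (nhdsWithin cmin (Set.Ioi cmin)) (nhds (0 * (volume X)⁻¹)) :=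
    ENNReal.Tendsto.mul_const hmain (Or.inr (by simpa using hX0))
  simpa [ENNReal.div_eq_inv_mul, mul_comm, zero_mul] using this
end

section
/- If x is uniformly distributed on the prolate hyperspheroid X_f̂ with focal points x_start, x_goal, focal distance c_min and transverse diameter c, then the expected value of f̂(x) = ‖x_start − x‖ + ‖x − x_goal‖ equals (n·c² + c_min²)/((n+1)·c). -/
set_option maxHeartbeats 1000000

open MeasureTheory Metric Set

lemma scalar_ellipse {h t s ρ : ℝ} (hh : 0 < h) (ht : 2*h < t) (hρ : 0 ≤ ρ) :
    Real.sqrt ((s-h)^2 + ρ^2) + Real.sqrt ((s+h)^2 + ρ^2) ≤ t ↔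
    4*s^2*(t^2 - 4*h^2) + 4*ρ^2*t^2 ≤ t^2*(t^2 - 4*h^2) := by
  have ht0 : 0 < t := lt_trans (by linarith) ht
  set A := Real.sqrt ((s-h)^2 + ρ^2) with hA
  set B := Real.sqrt ((s+h)^2 + ρ^2) with hB
  have hA0 : 0 ≤ A := Real.sqrt_nonneg _
  have hB0 : 0 ≤ B := Real.sqrt_nonneg _
  have hA2 : A^2 = (s-h)^2 + ρ^2 := Real.sq_sqrt (by positivity)
  have hB2 : B^2 = (s+h)^2 + ρ^2 := Real.sq_sqrt (by positivity)
  have hsum : A^2 + B^2 = 2*s^2 + 2*h^2 + 2*ρ^2 := by rw [hA2, hB2]; ring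
  have hprod : (A*B)^2 = ((s-h)^2 + ρ^2) * ((s+h)^2 + ρ^2) := by rw [mul_pow, hA2, hB2]
  have key : (t^2 - (2*s^2+2*h^2+2*ρ^2))^2 - 4*(((s-h)^2+ρ^2)*((s+h)^2+ρ^2))
      = t^2*(t^2-4*h^2) - (4*s^2*(t^2-4*h^2)+4*ρ^2*t^2) := by ring
  constructor
  · intro hle
    have hsq : (A+B)*(A+B) ≤ t*t := mul_self_le_mul_self (by positivity) hle
    have hM : 2*(A*B) ≤ t^2 - (A^2 + B^2) := by
      have e : (A+B)*(A+B) = A^2+B^2+2*(A*B) := by ring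
      rw [e] at hsq; have e2 : t*t = t^2 := by ring
      rw [e2] at hsq; linarith
    have h4 : (2*(A*B))*(2*(A*B)) ≤ (t^2 - (A^2+B^2))*(t^2 - (A^2+B^2)) :=
      mul_self_le_mul_self (by positivity) hM
    have h4' : 4*(((s-h)^2+ρ^2)*((s+h)^2+ρ^2)) ≤ (t^2 - (2*s^2+2*h^2+2*ρ^2))^2 := by
      have e : (2*(A*B))*(2*(A*B)) = 4*((A*B)^2) := by ring
      have e2 : (t^2 - (A^2+B^2))*(t^2 - (A^2+B^2)) = (t^2 - (A^2+B^2))^2 := by ring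
      rw [e, e2, hprod, hsum] at h4; exact h4
    linarith [h4', key]
  · intro hell
    have htd : 0 < t^2 - 4*h^2 := by nlinarith
    have hu : 4*s^2 ≤ t^2 := by
      have h1 : (4*s^2)*(t^2-4*h^2) ≤ t^2*(t^2-4*h^2) := by nlinarith [mul_nonneg (sq_nonneg ρ) (mul_pos ht0 ht0).le]
      exact le_of_mul_le_mul_right h1 htd
    have hw : 4*ρ^2 ≤ t^2 - 4*h^2 := by
      have h1 : (4*ρ^2)*t^2 ≤ (t^2-4*h^2)*t^2 := by nlinarith [mul_nonneg (sq_nonneg s) htd.le]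
      exact le_of_mul_le_mul_right h1 (by positivity)
    have hM : 0 ≤ t^2 - (A^2+B^2) := by rw [hsum]; linarith [hu, hw]
    have h4' : 4*(((s-h)^2+ρ^2)*((s+h)^2+ρ^2)) ≤ (t^2 - (2*s^2+2*h^2+2*ρ^2))^2 := by
      linarith [key, hell]
    have h4 : (2*(A*B))^2 ≤ (t^2 - (A^2+B^2))^2 := by
      have e1 : (2*(A*B))^2 = 4*((A*B)^2) := by ring
      rw [hsum, e1, hprod]; exact h4'
    have hAB : 2*(A*B) ≤ t^2 - (A^2+B^2) := by
      have h2AB : 0 ≤ 2*(A*B) := by positivity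
      calc 2*(A*B) = Real.sqrt ((2*(A*B))^2) := (Real.sqrt_sq h2AB).symm
        _ ≤ Real.sqrt ((t^2 - (A^2+B^2))^2) := Real.sqrt_le_sqrt h4
        _ = t^2 - (A^2+B^2) := Real.sqrt_sq hM
    have hsq : (A+B)^2 ≤ t^2 := by
      have e : (A+B)^2 = A^2+B^2+2*(A*B) := by ring
      rw [e]; linarith [hAB]
    calc A + B = Real.sqrt ((A+B)^2) := (Real.sqrt_sq (by positivity)).symm
      _ ≤ Real.sqrt (t^2) := Real.sqrt_le_sqrt hsq
      _ = t := Real.sqrt_sq ht0.le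

noncomputable section

variable (m : ℕ) (d : ℝ)

def e0 : EuclideanSpace ℝ (Fin (m+1)) := EuclideanSpace.single 0 1

def gfun (y : EuclideanSpace ℝ (Fin (m+1))) : ℝ :=
  ‖(d/2) • e0 m - y‖ + ‖y + (d/2) • e0 m‖

def rad (y : EuclideanSpace ℝ (Fin (m+1))) : ℝ := ∑ i : Fin m, (y i.succ)^2

lemma rad_nonneg (y : EuclideanSpace ℝ (Fin (m+1))) : 0 ≤ rad m y :=
  Finset.sum_nonneg fun i _ => sq_nonneg _

lemma e0_apply_zero : e0 m 0 = 1 := by simp [e0, EuclideanSpace.single_apply]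

lemma e0_apply_succ (i : Fin m) : e0 m i.succ = 0 := by
  simp [e0, EuclideanSpace.single_apply, Fin.succ_ne_zero]

lemma gfun_coord (y : EuclideanSpace ℝ (Fin (m+1))) :
    gfun m d y = Real.sqrt ((y 0 - d/2)^2 + rad m y) + Real.sqrt ((y 0 + d/2)^2 + rad m y) := by
  have h1 : ‖(d/2) • e0 m - y‖ = Real.sqrt ((y 0 - d/2)^2 + rad m y) := by
    rw [EuclideanSpace.norm_eq]
    congr 1
    rw [Fin.sum_univ_succ]
    simp only [PiLp.sub_apply, PiLp.smul_apply, smul_eq_mul, e0_apply_zero, e0_apply_succ,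
      Real.norm_eq_abs, sq_abs, rad]
    ring_nf
  have h2 : ‖y + (d/2) • e0 m‖ = Real.sqrt ((y 0 + d/2)^2 + rad m y) := by
    rw [EuclideanSpace.norm_eq]
    congr 1
    rw [Fin.sum_univ_succ]
    simp only [PiLp.add_apply, PiLp.smul_apply, smul_eq_mul, e0_apply_zero, e0_apply_succ,
      Real.norm_eq_abs, sq_abs, rad]
    ring_nf
  rw [gfun, h1, h2]

lemma gfun_continuous : Continuous (gfun m d) := by
  unfold gfun
  fun_prop

lemma gfun_nonneg (y : EuclideanSpace ℝ (Fin (m+1))) : 0 ≤ gfun m d y :=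
  add_nonneg (norm_nonneg _) (norm_nonneg _)

lemma gfun_ge (hd : 0 ≤ d) (y : EuclideanSpace ℝ (Fin (m+1))) : d ≤ gfun m d y := by
  have := norm_add_le ((d/2) • e0 m - y) (y + (d/2) • e0 m)
  have he : ((d/2) • e0 m - y) + (y + (d/2) • e0 m) = d • e0 m := by
    module
  rw [he] at this
  have hnorm : ‖(d:ℝ) • e0 m‖ = d := by
    rw [norm_smul, Real.norm_eq_abs, abs_of_nonneg hd]
    simp [e0, EuclideanSpace.norm_single]
  rw [hnorm] at this
  exact le_trans this (le_of_eq rfl)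

lemma gfun_bound (hd : 0 ≤ d) (y : EuclideanSpace ℝ (Fin (m+1))) :
    ‖y‖ ≤ gfun m d y + d/2 * ‖e0 m‖ := by
  have h : ‖y‖ ≤ ‖(d/2) • e0 m - y‖ + ‖(d/2) • e0 m‖ := by
    have he : y = ((d/2) • e0 m) - ((d/2) • e0 m - y) := by module
    calc ‖y‖ = ‖((d/2) • e0 m) - ((d/2) • e0 m - y)‖ := by rw [← he]
      _ ≤ ‖(d/2) • e0 m‖ + ‖(d/2) • e0 m - y‖ := norm_sub_le _ _
      _ = ‖(d/2) • e0 m - y‖ + ‖(d/2) • e0 m‖ := by ring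
  have h2 : ‖(d/2) • e0 m‖ ≤ d/2 * ‖e0 m‖ := by
    rw [norm_smul, Real.norm_eq_abs, abs_of_nonneg (by linarith : (0:ℝ) ≤ d/2)]
  have h3 : ‖(d/2) • e0 m - y‖ ≤ gfun m d y := le_add_of_nonneg_right (norm_nonneg _)
  linarith

def Dmap (a b : ℝ) : EuclideanSpace ℝ (Fin (m+1)) →ₗ[ℝ] EuclideanSpace ℝ (Fin (m+1)) where
  toFun y := WithLp.toLp 2 (fun i => (if i = (0 : Fin (m+1)) then a else b) * y i)
  map_add' x y := by ext i; simp [mul_add]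
  map_smul' r x := by ext i; simp [smul_eq_mul]; ring

lemma Dmap_apply (a b : ℝ) (y : EuclideanSpace ℝ (Fin (m+1))) (i : Fin (m+1)) :
    Dmap m a b y i = (if i = 0 then a else b) * y i := rfl

lemma Dmap_det (a b : ℝ) : LinearMap.det (Dmap m a b) = a * b^m := by
  classical
  let bas : Module.Basis (Fin (m+1)) ℝ (EuclideanSpace ℝ (Fin (m+1))) :=
    (EuclideanSpace.basisFun (Fin (m+1)) ℝ).toBasis
  have hmat : LinearMap.toMatrix bas bas (Dmap m a b) =
      Matrix.diagonal (fun i => if i = 0 then a else b) := by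
    ext i j
    rw [LinearMap.toMatrix_apply]
    have hrepr : ∀ (x : EuclideanSpace ℝ (Fin (m+1))), bas.repr x i = x i := by
      intro x
      simp [bas, OrthonormalBasis.coe_toBasis_repr_apply, EuclideanSpace.basisFun_repr]
    rw [hrepr]
    have hbas : bas j = EuclideanSpace.single j 1 := by
      simp [bas, OrthonormalBasis.coe_toBasis, EuclideanSpace.basisFun_apply]
    rw [hbas, Dmap_apply]
    by_cases hij : i = j
    · subst hij; simp [EuclideanSpace.single_apply, Matrix.diagonal_apply_eq]
    · simp [EuclideanSpace.single_apply, Matrix.diagonal_apply_ne _ hij, hij]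
  rw [← LinearMap.det_toMatrix bas, hmat, Matrix.det_diagonal, Fin.prod_univ_succ]
  simp [Fin.succ_ne_zero]

lemma gfun_le_iff (hd : 0 < d) {t : ℝ} (ht : d < t) (y : EuclideanSpace ℝ (Fin (m+1))) :
    gfun m d y ≤ t ↔
    4*(y 0)^2*(t^2-d^2) + 4*(rad m y)*t^2 ≤ t^2*(t^2-d^2) := by
  rw [gfun_coord]
  have hρ := rad_nonneg m y
  have key := scalar_ellipse (h := d/2) (t := t) (s := y 0) (ρ := Real.sqrt (rad m y))
    (by linarith) (by linarith) (Real.sqrt_nonneg _)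
  rw [Real.sq_sqrt hρ] at key
  have e1 : t^2 - 4*(d/2)^2 = t^2 - d^2 := by ring
  rw [e1] at key
  exact key

lemma norm_sq_eq (z : EuclideanSpace ℝ (Fin (m+1))) :
    ‖z‖^2 = (z 0)^2 + rad m z := by
  rw [EuclideanSpace.norm_eq, Real.sq_sqrt (by positivity)]
  rw [Fin.sum_univ_succ]
  simp [Real.norm_eq_abs, sq_abs, rad]

lemma rad_Dmap (a b : ℝ) (z : EuclideanSpace ℝ (Fin (m+1))) :
    rad m (Dmap m a b z) = b^2 * rad m z := by
  unfold rad
  rw [Finset.mul_sum]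
  refine Finset.sum_congr rfl fun i _ => ?_
  rw [Dmap_apply, if_neg (Fin.succ_ne_zero i)]
  ring

lemma set_eq (hd : 0 < d) {t : ℝ} (ht : d < t) :
    {y : EuclideanSpace ℝ (Fin (m+1)) | gfun m d y ≤ t}
      = Dmap m (t/2) (Real.sqrt (t^2-d^2)/2) '' closedBall 0 1 := by
  have ht0 : 0 < t := lt_trans hd ht
  have htd : 0 < t^2 - d^2 := by nlinarith
  set β := Real.sqrt (t^2 - d^2) with hβ
  have hβpos : 0 < β := Real.sqrt_pos.mpr htd
  have hβ2 : β^2 = t^2 - d^2 := Real.sq_sqrt htd.le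
  ext y
  simp only [Set.mem_setOf_eq, Set.mem_image, Metric.mem_closedBall, dist_zero_right]
  rw [gfun_le_iff m d hd ht]
  constructor
  · intro hy
    refine ⟨(WithLp.toLp 2 (fun i => if i = 0 then y 0 / (t/2) else y i / (β/2)) :
        EuclideanSpace ℝ (Fin (m+1))), ?_, ?_⟩
    · set z : EuclideanSpace ℝ (Fin (m+1)) :=
        WithLp.toLp 2 (fun i => if i = 0 then y 0 / (t/2) else y i / (β/2)) with hz
      have hz0 : z 0 = y 0 / (t/2) := by simp [hz]
      have hzr : rad m z = rad m y / (β/2)^2 := by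
        unfold rad
        rw [Finset.sum_div]
        refine Finset.sum_congr rfl fun i _ => ?_
        have : z i.succ = y i.succ / (β/2) := by simp [hz, Fin.succ_ne_zero i]
        rw [this, div_pow]
      have hn2 : ‖z‖^2 ≤ 1 := by
        have hb2' : (β/2)^2 = (t^2-d^2)/4 := by rw [div_pow, hβ2]; norm_num
        rw [norm_sq_eq, hz0, hzr, div_pow, hb2']
        rw [div_add_div _ _ (by positivity) (by positivity)]
        rw [div_le_one (by positivity)]
        nlinarith [hy]
      have := Real.sqrt_le_sqrt hn2
      rw [Real.sqrt_one, Real.sqrt_sq (norm_nonneg z)] at this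
      exact this
    · ext i
      rw [Dmap_apply]
      by_cases hi : i = 0
      · subst hi; simp only [if_pos rfl, ↓reduceIte]
        field_simp
      · simp only [if_neg hi]
        field_simp
  · rintro ⟨z, hz, rfl⟩
    have hz2 : (z 0)^2 + rad m z ≤ 1 := by
      rw [← norm_sq_eq]
      nlinarith [norm_nonneg z]
    have hy0 : Dmap m (t/2) (β/2) z 0 = t/2 * z 0 := by rw [Dmap_apply, if_pos rfl]
    have hrad := rad_Dmap m (t/2) (β/2) z
    have hb2' : (β/2)^2 = (t^2-d^2)/4 := by rw [div_pow, hβ2]; norm_num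
    rw [hy0, hrad, hb2']
    have key : t^2*(t^2-d^2)*((z 0)^2 + rad m z) ≤ t^2*(t^2-d^2)*1 :=
      mul_le_mul_of_nonneg_left hz2 (by positivity)
    nlinarith [key]

lemma vol_eq (hd : 0 < d) {t : ℝ} (ht : d < t) :
    volume {y : EuclideanSpace ℝ (Fin (m+1)) | gfun m d y ≤ t}
      = ENNReal.ofReal ((t/2) * (Real.sqrt (t^2-d^2)/2)^m)
          * volume (closedBall (0 : EuclideanSpace ℝ (Fin (m+1))) 1) := by
  have ht0 : 0 < t := lt_trans hd ht
  have htd : 0 < t^2 - d^2 := by nlinarith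
  rw [set_eq m d hd ht, MeasureTheory.Measure.addHaar_image_linearMap, Dmap_det]
  congr 2
  rw [abs_of_pos]
  positivity

lemma empty_eq (hd : 0 < d) {t : ℝ} (ht : t < d) :
    {y : EuclideanSpace ℝ (Fin (m+1)) | gfun m d y ≤ t} = ∅ := by
  ext y
  simp only [Set.mem_setOf_eq, Set.mem_empty_iff_false, iff_false, not_le]
  exact lt_of_lt_of_le ht (gfun_ge m d hd.le y)

lemma model_avg (d c : ℝ) (hd : 0 < d) (hc : d < c) :
    ⨍ y in {y : EuclideanSpace ℝ (Fin (m+1)) | gfun m d y ≤ c}, gfun m d y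
      = (((m:ℝ)+1) * c^2 + d^2) / (((m:ℝ)+2) * c) := by
  have hc0 : 0 < c := lt_trans hd hc
  have hcd : 0 < c^2 - d^2 := by nlinarith
  set E := EuclideanSpace ℝ (Fin (m+1))
  set S := {y : E | gfun m d y ≤ c} with hSdef
  set B := volume (closedBall (0 : E) 1) with hB
  have hBpos : 0 < B := measure_closedBall_pos volume 0 one_pos
  have hBfin : B ≠ ⊤ := measure_closedBall_lt_top.ne
  set Br := B.toReal with hBr
  have hBrpos : 0 < Br := ENNReal.toReal_pos hBpos.ne' hBfin
  set vfun : ℝ → ℝ := fun t => (t/2) * (Real.sqrt (t^2-d^2)/2)^m with hvfun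
  have hvolS : volume S = ENNReal.ofReal (vfun c) * B := vol_eq m d hd hc
  have hvc_nonneg : 0 ≤ vfun c := by
    simp only [hvfun]; positivity
  have hSfin : volume S ≠ ⊤ := by
    rw [hvolS]; exact ENNReal.mul_ne_top ENNReal.ofReal_ne_top hBfin
  have hVcr : (volume S).toReal = vfun c * Br := by
    rw [hvolS, ENNReal.toReal_mul, ENNReal.toReal_ofReal hvc_nonneg]
  have hσpos : 0 < Real.sqrt (c^2-d^2) := Real.sqrt_pos.mpr hcd
  have hvc_pos : 0 < vfun c := by simp only [hvfun]; positivity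
  have hVcr_pos : 0 < (volume S).toReal := by rw [hVcr]; positivity
  have hgcont : Continuous (gfun m d) := gfun_continuous m d
  have hSmeas : MeasurableSet S := (isClosed_le hgcont continuous_const).measurableSet
  have hInt : IntegrableOn (gfun m d) S volume := by
    apply Measure.integrableOn_of_bounded hSfin hgcont.aestronglyMeasurable (M := c)
    filter_upwards [ae_restrict_mem hSmeas] with y hy
    rw [Real.norm_eq_abs, abs_of_nonneg (gfun_nonneg m d y)]
    exact hy
  -- layer cake
  have hlayer : ∫ y in S, gfun m d y =
      ∫ t in Set.Ioi (0:ℝ), ((volume.restrict S) {a | t < gfun m d a}).toReal := by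
    apply MeasureTheory.Integrable.integral_eq_integral_meas_lt hInt
    filter_upwards with y using gfun_nonneg m d y
  set F : ℝ → ℝ := fun t =>
    if t < c then ((volume S).toReal - (if d < t then vfun t * Br else 0)) else 0 with hF
  have hvol_t : ∀ t, d < t → volume {a : E | gfun m d a ≤ t} = ENNReal.ofReal (vfun t) * B :=
    fun t ht => vol_eq m d hd ht
  have eq1 : ∀ t ∈ Set.Ioi (0:ℝ), t ≠ d →
      ((volume.restrict S) {a | t < gfun m d a}).toReal = F t := by
    intro t ht htne
    have hopen : MeasurableSet {a : E | t < gfun m d a} :=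
      (isOpen_lt continuous_const hgcont).measurableSet
    rw [Measure.restrict_apply hopen]
    rcases le_or_gt c t with hct | htc
    · have : {a : E | t < gfun m d a} ∩ S = ∅ := by
        ext a
        simp only [Set.mem_inter_iff, Set.mem_setOf_eq, Set.mem_empty_iff_false, iff_false,
          not_and, not_le, hSdef]
        intro ha
        linarith
      rw [this, measure_empty]
      simp [hF, not_lt.mpr hct]
    · rcases lt_or_gt_of_ne htne with htd | hdt
      · -- t < d : the whole S
        have : {a : E | t < gfun m d a} ∩ S = S := by
          apply Set.inter_eq_self_of_subset_right
          intro a _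
          exact lt_of_lt_of_le htd (gfun_ge m d hd.le a)
        rw [this]
        simp [hF, htc, not_lt.mpr htd.le]
      · -- d < t < c
        have hsub : {a : E | gfun m d a ≤ t} ⊆ S := fun a ha => le_trans ha htc.le
        have hmeasT : MeasurableSet {a : E | gfun m d a ≤ t} :=
          (isClosed_le hgcont continuous_const).measurableSet
        have hfinT : volume {a : E | gfun m d a ≤ t} ≠ ⊤ := by
          rw [hvol_t t hdt]
          exact ENNReal.mul_ne_top ENNReal.ofReal_ne_top hBfin
        have hset : {a : E | t < gfun m d a} ∩ S = S \ {a : E | gfun m d a ≤ t} := by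
          ext a
          simp only [Set.mem_inter_iff, Set.mem_setOf_eq, Set.mem_diff, hSdef, not_le]
          tauto
        rw [hset, measure_diff hsub hmeasT.nullMeasurableSet hfinT,
          ENNReal.toReal_sub_of_le (measure_mono hsub) hSfin]
        have hvt_nonneg : 0 ≤ vfun t := by
          have ht0 : 0 < t := lt_trans hd hdt
          simp only [hvfun]; positivity
        rw [hvol_t t hdt, ENNReal.toReal_mul, ENNReal.toReal_ofReal hvt_nonneg]
        simp [hF, htc, hdt, hBr]
  have hae_ne : ∀ᵐ (t : ℝ), t ≠ d := by
    rw [MeasureTheory.ae_iff]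
    have : {a : ℝ | ¬ a ≠ d} = {d} := by ext a; simp
    rw [this]
    exact Real.volume_singleton
  have eq2 : ∫ t in Set.Ioi (0:ℝ), ((volume.restrict S) {a | t < gfun m d a}).toReal
      = ∫ t in Set.Ioi (0:ℝ), F t := by
    apply MeasureTheory.setIntegral_congr_ae measurableSet_Ioi
    filter_upwards [hae_ne] with t htne ht
    exact eq1 t ht htne
  -- F vanishes outside Ioc 0 c
  have eq3 : ∫ t in Set.Ioi (0:ℝ), F t = ∫ t in Set.Ioc (0:ℝ) c, F t := by
    apply MeasureTheory.setIntegral_eq_of_subset_of_forall_diff_eq_zero measurableSet_Ioi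
      Set.Ioc_subset_Ioi_self
    intro t ht
    simp only [Set.mem_diff, Set.mem_Ioi, Set.mem_Ioc, not_and, not_le] at ht
    have : ¬ t < c := by
      intro hlt
      exact absurd (ht.2 ht.1) (not_lt.mpr hlt.le)
    simp [hF, this]
  have hsplit : Set.Ioc (0:ℝ) d ∪ Set.Ioc d c = Set.Ioc (0:ℝ) c :=
    Set.Ioc_union_Ioc_eq_Ioc hd.le hc.le
  have hF1 : Set.EqOn F (fun _ => (volume S).toReal) (Set.Ioc (0:ℝ) d) := by
    intro t ht
    simp only [Set.mem_Ioc] at ht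
    have h1 : t < c := lt_of_le_of_lt ht.2 hc
    have h2 : ¬ d < t := not_lt.mpr ht.2
    simp [hF, h1, h2]
  have hF2 : Set.EqOn F (fun t => (volume S).toReal - vfun t * Br) (Set.Ioc d c) := by
    intro t ht
    simp only [Set.mem_Ioc] at ht
    rcases lt_or_eq_of_le ht.2 with hlt | heq
    · simp [hF, hlt, ht.1]
    · subst heq
      simp [hF, lt_irrefl, hVcr]
  have hI1 : ∫ t in Set.Ioc (0:ℝ) d, F t = (volume S).toReal * d := by
    rw [MeasureTheory.setIntegral_congr_fun measurableSet_Ioc hF1]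
    rw [MeasureTheory.setIntegral_const, Real.volume_real_Ioc_of_le hd.le, smul_eq_mul]
    ring
  set σ : ℝ := Real.sqrt (c^2-d^2) with hσ
  set G : ℝ → ℝ := fun t => (Real.sqrt (t^2-d^2))^(m+2)/(2^(m+1)*((m:ℝ)+2)) with hG
  have hvcont : Continuous vfun := by
    apply Continuous.mul
    · exact continuous_id.div_const 2
    · exact (((Real.continuous_sqrt.comp ((continuous_pow 2).sub continuous_const)).div_const 2).pow m)
  have hGcont : Continuous G := by
    apply Continuous.div_const
    exact (Real.continuous_sqrt.comp ((continuous_pow 2).sub continuous_const)).pow (m+2)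
  have hGderiv : ∀ t ∈ Set.Ioo d c, HasDerivWithinAt G (vfun t) (Set.Ioi t) t := by
    intro t ht
    have htd : d < t := ht.1
    have ht2 : 0 < t^2 - d^2 := by nlinarith
    have hσt : 0 < Real.sqrt (t^2-d^2) := Real.sqrt_pos.mpr ht2
    have h1 : HasDerivAt (fun u : ℝ => u^2 - d^2) (2*t) t := by
      simpa using (hasDerivAt_pow 2 t).sub_const (d^2)
    have h2 : HasDerivAt (fun u : ℝ => Real.sqrt (u^2-d^2))
        (1/(2*Real.sqrt (t^2-d^2)) * (2*t)) t :=
      (Real.hasDerivAt_sqrt ht2.ne').comp t h1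
    have h3 := h2.pow (m+2)
    have h4 := h3.div_const (2^(m+1)*((m:ℝ)+2))
    have heq : (↑(m+2) * Real.sqrt (t^2-d^2)^(m+2-1) * (1/(2*Real.sqrt (t^2-d^2)) * (2*t)))
        / (2^(m+1)*((m:ℝ)+2)) = vfun t := by
      have hm21 : m + 2 - 1 = m + 1 := rfl
      rw [hm21]
      simp only [hvfun]
      push_cast
      field_simp
      have h2m : (1/2:ℝ)^m * 2^m = 1 := by rw [← mul_pow]; norm_num
      linear_combination (-(t * Real.sqrt (t^2-d^2) * Real.sqrt (t^2-d^2)^m * 2)) * h2m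
    rw [heq] at h4
    exact h4.hasDerivWithinAt
  have hJ : ∫ t in d..c, vfun t = σ^(m+2)/(2^(m+1)*((m:ℝ)+2)) := by
    have hftc := intervalIntegral.integral_eq_sub_of_hasDeriv_right_of_le hc.le
      hGcont.continuousOn hGderiv (hvcont.intervalIntegrable d c)
    rw [hftc]
    have hGd : G d = 0 := by
      simp only [hG]
      rw [sub_self, Real.sqrt_zero, zero_pow (by omega), zero_div]
    rw [hGd, sub_zero]
  have hI2 : ∫ t in Set.Ioc d c, F t
      = (volume S).toReal * (c - d) - Br * (σ^(m+2)/(2^(m+1)*((m:ℝ)+2))) := by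
    rw [MeasureTheory.setIntegral_congr_fun measurableSet_Ioc hF2]
    rw [← intervalIntegral.integral_of_le hc.le]
    rw [intervalIntegral.integral_sub (intervalIntegrable_const)
      (show IntervalIntegrable (fun t => vfun t * Br) volume d c from
        (hvcont.mul continuous_const).intervalIntegrable d c)]
    rw [intervalIntegral.integral_const, intervalIntegral.integral_mul_const, hJ]
    rw [smul_eq_mul]
    ring
  have hFint1 : IntegrableOn F (Set.Ioc (0:ℝ) d) volume := by
    rw [integrableOn_congr_fun hF1 measurableSet_Ioc]
    exact integrableOn_const measure_Ioc_lt_top.ne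
  have hFint2 : IntegrableOn F (Set.Ioc d c) volume := by
    rw [integrableOn_congr_fun hF2 measurableSet_Ioc]
    exact (continuous_const.sub (hvcont.mul continuous_const)).integrableOn_Ioc
  have htotal : ∫ y in S, gfun m d y
      = (volume S).toReal * c - Br * (σ^(m+2)/(2^(m+1)*((m:ℝ)+2))) := by
    rw [hlayer, eq2, eq3, ← hsplit,
      MeasureTheory.setIntegral_union (Set.Ioc_disjoint_Ioc_of_le le_rfl) measurableSet_Ioc hFint1 hFint2,
      hI1, hI2]
    ring
  rw [MeasureTheory.setAverage_eq, measureReal_def, htotal, smul_eq_mul]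
  have hσ2 : σ^2 = c^2-d^2 := Real.sq_sqrt hcd.le
  have hpow : σ^(m+2) = σ^m * (c^2-d^2) := by rw [pow_add, hσ2]
  have hσm : (0:ℝ) < σ^m := pow_pos hσpos m
  rw [hpow, hVcr]
  simp only [hvfun]
  rw [div_pow]
  field_simp
  ring

end

open MeasureTheory Metric in
/-- If `x` is uniformly distributed on the prolate hyperspheroid
`X_f̂ = {x : ‖x_start − x‖ + ‖x − x_goal‖ ≤ c}`, the expected value of
`f̂(x) = ‖x_start − x‖ + ‖x − x_goal‖` is `(n c² + c_min²)/((n+1) c)`. -/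
theorem stmt_8 (n : ℕ) (xstart xgoal : EuclideanSpace ℝ (Fin n)) (cmin c : ℝ)
    (hmin : cmin = ‖xstart - xgoal‖) (hpos : 0 < cmin) (hc : cmin < c) :
    ⨍ x in {x : EuclideanSpace ℝ (Fin n) | ‖xstart - x‖ + ‖x - xgoal‖ ≤ c},
        (‖xstart - x‖ + ‖x - xgoal‖) =
      ((n : ℝ) * c ^ 2 + cmin ^ 2) / (((n : ℝ) + 1) * c) := by
  have hn : n ≠ 0 := by
    rintro rfl
    have h0 : ‖xstart - xgoal‖ = 0 := by
      rw [EuclideanSpace.norm_eq]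
      simp
    rw [h0] at hmin
    exact absurd hmin hpos.ne'
  obtain ⟨m, rfl⟩ : ∃ m, n = m + 1 :=
    ⟨n - 1, (Nat.succ_pred_eq_of_pos (Nat.pos_of_ne_zero hn)).symm⟩
  set u : EuclideanSpace ℝ (Fin (m+1)) := cmin⁻¹ • (xstart - xgoal) with hu
  have hxsg : ‖xstart - xgoal‖ = cmin := hmin.symm
  have hcu : cmin • u = xstart - xgoal := by
    rw [hu, smul_smul, mul_inv_cancel₀ hpos.ne', one_smul]
  have hunorm : ‖u‖ = 1 := by
    rw [hu, norm_smul, norm_inv, Real.norm_eq_abs, abs_of_pos hpos, hxsg]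
    field_simp
  have he0norm : ‖e0 m‖ = 1 := by
    rw [e0, EuclideanSpace.norm_single, norm_one]
  set R : EuclideanSpace ℝ (Fin (m+1)) ≃ₗᵢ[ℝ] EuclideanSpace ℝ (Fin (m+1)) :=
    Submodule.reflection (ℝ ∙ (e0 m - u))ᗮ with hR
  have hRe0 : R (e0 m) = u := Submodule.reflection_sub (by rw [he0norm, hunorm])
  set mid : EuclideanSpace ℝ (Fin (m+1)) := xstart - (cmin/2) • u with hmid
  set φ : EuclideanSpace ℝ (Fin (m+1)) → EuclideanSpace ℝ (Fin (m+1)) :=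
    fun y => mid + R y with hφ
  have key : ∀ y, ‖xstart - φ y‖ + ‖φ y - xgoal‖ = gfun m cmin y := by
    intro y
    have h1 : xstart - φ y = R ((cmin/2) • e0 m - y) := by
      have hr : R ((cmin/2) • e0 m - y) = (cmin/2) • u - R y := by
        rw [map_sub, _root_.map_smul, hRe0]
      rw [hr, hφ, hmid]
      module
    have h2 : φ y - xgoal = R (y + (cmin/2) • e0 m) := by
      have hr : R (y + (cmin/2) • e0 m) = R y + (cmin/2) • u := by
        rw [map_add, _root_.map_smul, hRe0]
      have hx : xstart = xgoal + cmin • u := by rw [hcu]; abel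
      rw [hr, hφ, hmid, hx]
      module
    rw [h1, h2, LinearIsometryEquiv.norm_map, LinearIsometryEquiv.norm_map, gfun]
  have hφmp : MeasurePreserving φ
      (volume : Measure (EuclideanSpace ℝ (Fin (m+1)))) volume := by
    have h2 : MeasurePreserving (fun x : EuclideanSpace ℝ (Fin (m+1)) => mid + x)
        volume volume := measurePreserving_add_left volume mid
    exact h2.comp R.measurePreserving
  have hφemb : MeasurableEmbedding φ := by
    have hcomp : φ = (fun x : EuclideanSpace ℝ (Fin (m+1)) => mid + x) ∘ R := rfl
    rw [hcomp]
    exact (MeasurableEquiv.addLeft mid).measurableEmbedding.comp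
      R.toMeasurableEquiv.measurableEmbedding
  set Sorig := {x : EuclideanSpace ℝ (Fin (m+1)) | ‖xstart - x‖ + ‖x - xgoal‖ ≤ c} with hSorig
  have hpre : φ ⁻¹' Sorig = {y : EuclideanSpace ℝ (Fin (m+1)) | gfun m cmin y ≤ c} := by
    ext y
    simp only [Set.mem_preimage, hSorig, Set.mem_setOf_eq, key y]
  have hScont : Continuous (fun x : EuclideanSpace ℝ (Fin (m+1)) =>
      ‖xstart - x‖ + ‖x - xgoal‖) := by
    apply Continuous.add
    · exact (continuous_const.sub continuous_id).norm
    · exact (continuous_id.sub continuous_const).norm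
  have hSmeas : MeasurableSet Sorig := (isClosed_le hScont continuous_const).measurableSet
  have hvol : volume Sorig
      = volume {y : EuclideanSpace ℝ (Fin (m+1)) | gfun m cmin y ≤ c} := by
    rw [← hpre, hφmp.measure_preimage hSmeas.nullMeasurableSet]
  have hint : ∫ y in {y : EuclideanSpace ℝ (Fin (m+1)) | gfun m cmin y ≤ c}, gfun m cmin y
      = ∫ x in Sorig, (‖xstart - x‖ + ‖x - xgoal‖) := by
    rw [← hpre, ← hφmp.setIntegral_preimage_emb hφemb
      (fun x => ‖xstart - x‖ + ‖x - xgoal‖) Sorig]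
    simp only [key]
  have havg : ⨍ x in Sorig, (‖xstart - x‖ + ‖x - xgoal‖)
      = ⨍ y in {y : EuclideanSpace ℝ (Fin (m+1)) | gfun m cmin y ≤ c}, gfun m cmin y := by
    rw [MeasureTheory.setAverage_eq, MeasureTheory.setAverage_eq, measureReal_def,
      measureReal_def, hvol, hint]
  rw [havg, model_avg m cmin c hpos hc]
  push_cast
  ring
end

section
/- The iteration c_{i+1} = g(c_i) with g(c) = (n c² + c_min²)/((n+1)c) and c_0 > c_min converges to c_min, and the convergence is linear with asymptotic rate (n−1)/(n+1), i.e., lim_{i→∞} (c_{i+1} − c_min)/(c_i − c_min) = (n−1)/(n+1). -/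
open Filter

/-- The iteration `c_{i+1} = (n c_i² + c_min²)/((n+1) c_i)` with `c_0 > c_min` converges to
`c_min` linearly with asymptotic rate `(n−1)/(n+1)`. -/
theorem stmt_10 (n : ℕ) (hn : 2 ≤ n) (cmin : ℝ) (hpos : 0 < cmin) (cseq : ℕ → ℝ)
    (h0 : cmin < cseq 0)
    (hiter : ∀ i, cseq (i + 1) = ((n : ℝ) * cseq i ^ 2 + cmin ^ 2) / (((n : ℝ) + 1) * cseq i)) :
    Tendsto cseq atTop (nhds cmin) ∧
    Tendsto (fun i => (cseq (i + 1) - cmin) / (cseq i - cmin)) atTop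
      (nhds (((n : ℝ) - 1) / ((n : ℝ) + 1))) := by
  have hn1 : (1:ℝ) ≤ (n:ℝ) := by exact_mod_cast le_trans (by norm_num) hn
  have hnpos : (0:ℝ) < (n:ℝ) + 1 := by linarith
  -- invariant
  have hinv : ∀ i, cmin < cseq i := by
    intro i
    induction i with
    | zero => exact h0
    | succ i ih =>
      have hc : 0 < cseq i := lt_trans hpos ih
      rw [hiter, lt_div_iff₀ (by positivity)]
      nlinarith [mul_pos (sub_pos.2 ih)
        (show (0:ℝ) < (n:ℝ) * cseq i - cmin by nlinarith)]
  have hcpos : ∀ i, 0 < cseq i := fun i => lt_trans hpos (hinv i)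
  -- error identity
  have hid : ∀ i, cseq (i + 1) - cmin
      = (cseq i - cmin) * (((n:ℝ) * cseq i - cmin) / (((n:ℝ) + 1) * cseq i)) := by
    intro i
    have hc := (hcpos i).ne'
    rw [hiter]
    field_simp
    ring
  set q : ℝ := (n:ℝ) / ((n:ℝ) + 1) with hq
  have hq0 : 0 ≤ q := by positivity
  have hq1 : q < 1 := by rw [hq, div_lt_one hnpos]; linarith
  -- geometric bound
  have hgeo : ∀ i, cseq i - cmin ≤ q ^ i * (cseq 0 - cmin) := by
    intro i
    induction i with
    | zero => simp
    | succ i ih =>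
      have hc := hcpos i
      have hratio : ((n:ℝ) * cseq i - cmin) / (((n:ℝ) + 1) * cseq i) ≤ q := by
        rw [hq, div_le_div_iff₀ (by positivity) hnpos]
        nlinarith
      have he : 0 < cseq i - cmin := sub_pos.2 (hinv i)
      calc cseq (i + 1) - cmin
          = (cseq i - cmin) * (((n:ℝ) * cseq i - cmin) / (((n:ℝ) + 1) * cseq i)) := hid i
        _ ≤ (cseq i - cmin) * q := by
            exact mul_le_mul_of_nonneg_left hratio he.le
        _ ≤ (q ^ i * (cseq 0 - cmin)) * q := by
            apply mul_le_mul_of_nonneg_right ih hq0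
        _ = q ^ (i + 1) * (cseq 0 - cmin) := by ring
  -- convergence
  have htend0 : Tendsto (fun i => cseq i - cmin) atTop (nhds 0) := by
    have hgz : Tendsto (fun i => q ^ i * (cseq 0 - cmin)) atTop (nhds 0) := by
      have := (tendsto_pow_atTop_nhds_zero_of_lt_one hq0 hq1).mul_const (cseq 0 - cmin)
      simpa using this
    refine tendsto_of_tendsto_of_tendsto_of_le_of_le tendsto_const_nhds hgz
      (fun i => (sub_pos.2 (hinv i)).le) (fun i => hgeo i)
  have htend : Tendsto cseq atTop (nhds cmin) := by
    have := htend0.add_const cmin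
    simpa using this
  refine ⟨htend, ?_⟩
  -- ratio
  have heq : (fun i => (cseq (i + 1) - cmin) / (cseq i - cmin))
      = fun i => ((n:ℝ) * cseq i - cmin) / (((n:ℝ) + 1) * cseq i) := by
    funext i
    rw [hid i, mul_comm, mul_div_assoc, div_self (sub_pos.2 (hinv i)).ne', mul_one]
  rw [heq]
  have hnum : Tendsto (fun i => (n:ℝ) * cseq i - cmin) atTop (nhds ((n:ℝ) * cmin - cmin)) :=
    ((htend.const_mul _).sub_const cmin)
  have hden : Tendsto (fun i => ((n:ℝ) + 1) * cseq i) atTop (nhds (((n:ℝ) + 1) * cmin)) :=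
    htend.const_mul _
  have hdne : ((n:ℝ) + 1) * cmin ≠ 0 := by positivity
  have := hnum.div hden hdne
  convert this using 2
  · rfl
  · rw [div_eq_div_iff hnpos.ne' hdne]
    ring
end

section
/- Let x_start, x_goal ∈ ℝⁿ with c_min = ‖x_goal − x_start‖ > 0, c > c_min, x_c = (x_start + x_goal)/2, L = diag(c/2, √(c²−c_min²)/2, …, √(c²−c_min²)/2), and C ∈ SO(n) with first column (x_goal − x_start)/c_min. Then the map x ↦ C L x + x_c sends the closed unit ball bijectively onto X_f̂ = {x : ‖x_start − x‖ + ‖x − x_goal‖ ≤ c}. -/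
open Metric Matrix

lemma scalar_ellipse_s15 (a b f u r2 : ℝ) (ha : 0 < a) (hb : 0 < b) (hf : 0 < f)
    (hab : a ^ 2 = f ^ 2 + b ^ 2) (hr : 0 ≤ r2) :
    Real.sqrt ((a * u + f) ^ 2 + b ^ 2 * r2) + Real.sqrt ((a * u - f) ^ 2 + b ^ 2 * r2)
      ≤ 2 * a ↔ u ^ 2 + r2 ≤ 1 := by
  have hfa : f < a := by nlinarith
  have key1 : (a*u+f)^2 + b^2*r2 = (a+f*u)^2 + b^2*(u^2+r2-1) := by
    linear_combination (u^2-1) * hab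
  have key2 : (a*u-f)^2 + b^2*r2 = (a-f*u)^2 + b^2*(u^2+r2-1) := by
    linear_combination (u^2-1) * hab
  constructor
  · intro h
    by_contra hlt
    push_neg at hlt
    have hpos : 0 < b^2*(u^2+r2-1) := mul_pos (pow_pos hb 2) (by linarith)
    have h1 : (a + f * u) ^ 2 < (a * u + f) ^ 2 + b ^ 2 * r2 := by linarith
    have h2 : (a - f * u) ^ 2 < (a * u - f) ^ 2 + b ^ 2 * r2 := by linarith
    have s1 : a + f * u < Real.sqrt ((a * u + f) ^ 2 + b ^ 2 * r2) := by
      have := Real.sqrt_lt_sqrt (sq_nonneg _) h1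
      calc a + f * u ≤ |a + f * u| := le_abs_self _
        _ = Real.sqrt ((a + f * u) ^ 2) := (Real.sqrt_sq_eq_abs _).symm
        _ < _ := this
    have s2 : a - f * u < Real.sqrt ((a * u - f) ^ 2 + b ^ 2 * r2) := by
      have := Real.sqrt_lt_sqrt (sq_nonneg _) h2
      calc a - f * u ≤ |a - f * u| := le_abs_self _
        _ = Real.sqrt ((a - f * u) ^ 2) := (Real.sqrt_sq_eq_abs _).symm
        _ < _ := this
    linarith
  · intro h
    have hu : u ^ 2 ≤ 1 := by linarith
    have hu' : |u| ≤ 1 := by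
      rwa [← Real.sqrt_one, ← Real.sqrt_sq_eq_abs, Real.sqrt_le_sqrt_iff zero_le_one]
    have hu1 : -1 ≤ u := (abs_le.mp hu').1
    have hu2 : u ≤ 1 := (abs_le.mp hu').2
    have hnp : b^2*(u^2+r2-1) ≤ 0 := by
      apply mul_nonpos_of_nonneg_of_nonpos (sq_nonneg b); linarith
    have s1 : Real.sqrt ((a * u + f) ^ 2 + b ^ 2 * r2) ≤ a + f * u := by
      have h0 : 0 ≤ a + f * u := by nlinarith
      calc Real.sqrt ((a*u+f)^2 + b^2*r2) ≤ Real.sqrt ((a+f*u)^2) := by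
            apply Real.sqrt_le_sqrt; linarith
        _ = a + f * u := Real.sqrt_sq h0
    have s2 : Real.sqrt ((a * u - f) ^ 2 + b ^ 2 * r2) ≤ a - f * u := by
      have h0 : 0 ≤ a - f * u := by nlinarith
      calc Real.sqrt ((a*u-f)^2 + b^2*r2) ≤ Real.sqrt ((a-f*u)^2) := by
            apply Real.sqrt_le_sqrt; linarith
        _ = a - f * u := Real.sqrt_sq h0
    linarith

lemma orth_facts {n : ℕ} (C : Matrix (Fin n) (Fin n) ℝ)
    (hC : C ∈ Matrix.orthogonalGroup (Fin n) ℝ) : Cᵀ * C = 1 ∧ C * Cᵀ = 1 := by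
  have h1 := (Matrix.mem_orthogonalGroup_iff _ _).mp hC
  have h2 := (Matrix.mem_orthogonalGroup_iff' _ _).mp hC
  exact ⟨by simpa using h2, by simpa using h1⟩

lemma orth_sum_sq {n : ℕ} (C : Matrix (Fin n) (Fin n) ℝ) (h : Cᵀ * C = 1) (v : Fin n → ℝ) :
    ∑ j, (C.mulVec v j) ^ 2 = ∑ j, v j ^ 2 := by
  calc ∑ j, (C.mulVec v j)^2 = (C *ᵥ v) ⬝ᵥ (C *ᵥ v) := by simp [dotProduct, sq]
    _ = ((C *ᵥ v) ᵥ* C) ⬝ᵥ v := Matrix.dotProduct_mulVec _ _ _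
    _ = (Cᵀ *ᵥ (C *ᵥ v)) ⬝ᵥ v := by rw [Matrix.mulVec_transpose]
    _ = ((Cᵀ * C) *ᵥ v) ⬝ᵥ v := by rw [Matrix.mulVec_mulVec]
    _ = v ⬝ᵥ v := by rw [h, Matrix.one_mulVec]
    _ = ∑ j, v j ^2 := by simp [dotProduct, sq]

/-- With `x_c = (x_start + x_goal)/2`, `L = diag(c/2, √(c²−c_min²)/2, …)` and `C ∈ SO(n)` with
first column `(x_goal − x_start)/c_min`, the map `x ↦ C L x + x_c` sends the closed unit ball
bijectively onto `X_f̂ = {x : ‖x_start − x‖ + ‖x − x_goal‖ ≤ c}`. -/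
theorem stmt_15 (n : ℕ) [NeZero n] (xstart xgoal : EuclideanSpace ℝ (Fin n)) (cmin c : ℝ)
    (hmin : cmin = ‖xgoal - xstart‖) (hpos : 0 < cmin) (hc : cmin < c)
    (C : Matrix (Fin n) (Fin n) ℝ) (hC : C ∈ Matrix.orthogonalGroup (Fin n) ℝ)
    (hdet : C.det = 1) (hcol : ∀ i, C i 0 = (xgoal i - xstart i) / cmin) :
    Set.BijOn
      (fun x : EuclideanSpace ℝ (Fin n) =>
        (WithLp.equiv 2 (Fin n → ℝ)).symm
          (C.mulVec ((Matrix.diagonal fun i : Fin n =>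
            if i = 0 then c / 2 else Real.sqrt (c ^ 2 - cmin ^ 2) / 2).mulVec
            (WithLp.equiv 2 (Fin n → ℝ) x)))
          + (2 : ℝ)⁻¹ • (xstart + xgoal))
      (closedBall 0 1)
      {x : EuclideanSpace ℝ (Fin n) | ‖xstart - x‖ + ‖x - xgoal‖ ≤ c} := by
  classical
  have hc0 : 0 < c := lt_trans hpos hc
  set a : ℝ := c / 2 with ha_def
  set b : ℝ := Real.sqrt (c ^ 2 - cmin ^ 2) / 2 with hb_def
  set f : ℝ := cmin / 2 with hf_def
  have ha : 0 < a := by rw [ha_def]; positivity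
  have hf : 0 < f := by rw [hf_def]; positivity
  have hcc : 0 < c ^ 2 - cmin ^ 2 := by nlinarith
  have hb : 0 < b := by
    have := Real.sqrt_pos.mpr hcc
    rw [hb_def]; linarith
  have hab : a ^ 2 = f ^ 2 + b ^ 2 := by
    rw [ha_def, hf_def, hb_def, div_pow, div_pow, div_pow, Real.sq_sqrt hcc.le]; ring
  set d : Fin n → ℝ := fun i : Fin n => if i = 0 then a else b with hd_def
  have hdne : ∀ i, d i ≠ 0 := by
    intro i
    by_cases h : i = 0 <;> simp [hd_def, h, ne_of_gt, ha, hb]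
  have hC2 : Cᵀ * C = 1 := (orth_facts C hC).1
  have hC1 : C * Cᵀ = 1 := (orth_facts C hC).2
  have hCinv : ∀ v : Fin n → ℝ, Cᵀ *ᵥ (C *ᵥ v) = v := fun v => by
    rw [Matrix.mulVec_mulVec, hC2, Matrix.one_mulVec]
  have hCinv' : ∀ v : Fin n → ℝ, C *ᵥ (Cᵀ *ᵥ v) = v := fun v => by
    rw [Matrix.mulVec_mulVec, hC1, Matrix.one_mulVec]
  have hecol : ∀ i, C i 0 * f = (xgoal i - xstart i) / 2 := by
    intro i
    rw [hcol i, hf_def]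
    field_simp
  -- key equivalence
  have key : ∀ x : EuclideanSpace ℝ (Fin n),
      (‖xstart - ((WithLp.equiv 2 (Fin n → ℝ)).symm
          (C.mulVec ((Matrix.diagonal d).mulVec (WithLp.equiv 2 (Fin n → ℝ) x)))
          + (2 : ℝ)⁻¹ • (xstart + xgoal))‖
        + ‖((WithLp.equiv 2 (Fin n → ℝ)).symm
          (C.mulVec ((Matrix.diagonal d).mulVec (WithLp.equiv 2 (Fin n → ℝ) x)))
          + (2 : ℝ)⁻¹ • (xstart + xgoal)) - xgoal‖ ≤ c)
      ↔ ‖x‖ ≤ 1 := by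
    intro x
    set r2 : ℝ := ∑ i ∈ Finset.univ.erase 0, (x i) ^ 2 with hr2_def
    have hr2 : 0 ≤ r2 := Finset.sum_nonneg fun i _ => sq_nonneg _
    have hxnorm : ‖x‖ ≤ 1 ↔ (x 0) ^ 2 + r2 ≤ 1 := by
      rw [EuclideanSpace.norm_eq]
      rw [show (1:ℝ) = Real.sqrt 1 from Real.sqrt_one.symm,
        Real.sqrt_le_sqrt_iff zero_le_one, Real.sqrt_one]
      have hsum0 : ∑ i, ‖x i‖ ^ 2 = (x 0) ^ 2 + r2 := by
        simp only [Real.norm_eq_abs, sq_abs]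
        exact (Finset.add_sum_erase _ (fun i => (x i) ^ 2) (Finset.mem_univ 0)).symm
      rw [hsum0]
    set u1 : Fin n → ℝ := fun j => d j * x j + if j = 0 then f else 0 with hu1_def
    set u2 : Fin n → ℝ := fun j => d j * x j - if j = 0 then f else 0 with hu2_def
    have hCs : ∀ i, (C *ᵥ fun j => if j = 0 then f else 0) i = (xgoal i - xstart i) / 2 := by
      intro i
      have : (C *ᵥ fun j => if j = 0 then f else 0) i = ∑ k, C i k * (if k = 0 then f else 0) := rfl
      rw [this]
      simp only [mul_ite, mul_zero]
      rw [Finset.sum_ite_eq' Finset.univ 0 (fun k => C i k * f)]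
      simp [hecol i]
    have hC1app : ∀ i, (C *ᵥ u1) i
        = (C *ᵥ ((Matrix.diagonal d) *ᵥ (WithLp.equiv 2 (Fin n → ℝ) x))) i
          + (xgoal i - xstart i) / 2 := by
      intro i
      have hu : u1 = (Matrix.diagonal d) *ᵥ (WithLp.equiv 2 (Fin n → ℝ) x)
          + fun j => if j = 0 then f else 0 := by
        funext j
        simp [hu1_def, Matrix.mulVec_diagonal]
      rw [hu, Matrix.mulVec_add]
      simp [hCs i]
    have hC2app : ∀ i, (C *ᵥ u2) i
        = (C *ᵥ ((Matrix.diagonal d) *ᵥ (WithLp.equiv 2 (Fin n → ℝ) x))) i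
          - (xgoal i - xstart i) / 2 := by
      intro i
      have hu : u2 = (Matrix.diagonal d) *ᵥ (WithLp.equiv 2 (Fin n → ℝ) x)
          - fun j => if j = 0 then f else 0 := by
        funext j
        simp [hu2_def, Matrix.mulVec_diagonal]
      rw [hu, Matrix.mulVec_sub]
      simp [hCs i]
    have hu1sum : ∑ i, (u1 i) ^ 2 = (a * x 0 + f) ^ 2 + b ^ 2 * r2 := by
      rw [← Finset.add_sum_erase _ (fun i => (u1 i) ^ 2) (Finset.mem_univ 0)]
      have e0 : u1 0 ^ 2 = (a * x 0 + f) ^ 2 := by simp [hu1_def, hd_def]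
      have erest : ∑ i ∈ Finset.univ.erase 0, u1 i ^ 2 = b ^ 2 * r2 := by
        rw [hr2_def, Finset.mul_sum]
        refine Finset.sum_congr rfl fun i hi => ?_
        have hne : i ≠ 0 := Finset.ne_of_mem_erase hi
        simp only [hu1_def, hd_def, if_neg hne, add_zero]
        ring
      rw [e0, erest]
    have hu2sum : ∑ i, (u2 i) ^ 2 = (a * x 0 - f) ^ 2 + b ^ 2 * r2 := by
      rw [← Finset.add_sum_erase _ (fun i => (u2 i) ^ 2) (Finset.mem_univ 0)]
      have e0 : u2 0 ^ 2 = (a * x 0 - f) ^ 2 := by simp [hu2_def, hd_def]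
      have erest : ∑ i ∈ Finset.univ.erase 0, u2 i ^ 2 = b ^ 2 * r2 := by
        rw [hr2_def, Finset.mul_sum]
        refine Finset.sum_congr rfl fun i hi => ?_
        have hne : i ≠ 0 := Finset.ne_of_mem_erase hi
        simp only [hu2_def, hd_def, if_neg hne, sub_zero]
        ring
      rw [e0, erest]
    have hn1 : ‖xstart - ((WithLp.equiv 2 (Fin n → ℝ)).symm
          (C.mulVec ((Matrix.diagonal d).mulVec (WithLp.equiv 2 (Fin n → ℝ) x)))
          + (2 : ℝ)⁻¹ • (xstart + xgoal))‖
        = Real.sqrt ((a * x 0 + f) ^ 2 + b ^ 2 * r2) := by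
      rw [EuclideanSpace.norm_eq]
      congr 1
      rw [← hu1sum, ← orth_sum_sq C hC2 u1]
      apply Finset.sum_congr rfl
      intro i _
      have happ : (xstart - ((WithLp.equiv 2 (Fin n → ℝ)).symm
          (C.mulVec ((Matrix.diagonal d).mulVec (WithLp.equiv 2 (Fin n → ℝ) x)))
          + (2 : ℝ)⁻¹ • (xstart + xgoal))) i
          = -((C *ᵥ u1) i) := by
        simp only [PiLp.sub_apply, PiLp.add_apply, PiLp.smul_apply,
          WithLp.equiv_symm_apply, WithLp.ofLp_toLp, smul_eq_mul]
        rw [hC1app i]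
        ring
      rw [Real.norm_eq_abs, sq_abs, happ, neg_sq]
    have hn2 : ‖((WithLp.equiv 2 (Fin n → ℝ)).symm
          (C.mulVec ((Matrix.diagonal d).mulVec (WithLp.equiv 2 (Fin n → ℝ) x)))
          + (2 : ℝ)⁻¹ • (xstart + xgoal)) - xgoal‖
        = Real.sqrt ((a * x 0 - f) ^ 2 + b ^ 2 * r2) := by
      rw [EuclideanSpace.norm_eq]
      congr 1
      rw [← hu2sum, ← orth_sum_sq C hC2 u2]
      apply Finset.sum_congr rfl
      intro i _
      have happ : ((((WithLp.equiv 2 (Fin n → ℝ)).symm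
          (C.mulVec ((Matrix.diagonal d).mulVec (WithLp.equiv 2 (Fin n → ℝ) x)))
          + (2 : ℝ)⁻¹ • (xstart + xgoal)) - xgoal)) i
          = (C *ᵥ u2) i := by
        simp only [PiLp.sub_apply, PiLp.add_apply, PiLp.smul_apply,
          WithLp.equiv_symm_apply, WithLp.ofLp_toLp, smul_eq_mul]
        rw [hC2app i]
        ring
      rw [Real.norm_eq_abs, sq_abs, happ]
    rw [hn1, hn2, hxnorm, show c = 2 * a by rw [ha_def]; ring]
    exact scalar_ellipse_s15 a b f (x 0) r2 ha hb hf hab hr2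
  refine ⟨?_, ?_, ?_⟩
  · -- MapsTo
    intro x hx
    simp only [Set.mem_setOf_eq]
    exact (key x).mpr (by simpa [mem_closedBall_zero_iff] using hx)
  · -- InjOn
    intro x1 _ x2 _ heq
    simp only at heq
    have h3 : ∀ i, (C *ᵥ ((Matrix.diagonal d) *ᵥ (WithLp.equiv 2 (Fin n → ℝ) x1))) i
        = (C *ᵥ ((Matrix.diagonal d) *ᵥ (WithLp.equiv 2 (Fin n → ℝ) x2))) i := by
      intro i
      have := congrArg (fun z : EuclideanSpace ℝ (Fin n) => z i) heq
      simp only [PiLp.add_apply, WithLp.equiv_symm_apply, WithLp.ofLp_toLp] at this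
      linarith
    have h4 : (Matrix.diagonal d) *ᵥ (WithLp.equiv 2 (Fin n → ℝ) x1)
        = (Matrix.diagonal d) *ᵥ (WithLp.equiv 2 (Fin n → ℝ) x2) := by
      have h5 := congrArg (fun w => Cᵀ *ᵥ w) (funext h3)
      simpa only [hCinv] using h5
    apply PiLp.ext
    intro i
    have h6 := congrFun h4 i
    simp only [Matrix.mulVec_diagonal, WithLp.equiv_apply] at h6
    exact mul_left_cancel₀ (hdne i) h6
  · -- SurjOn
    intro y hy
    set v : Fin n → ℝ := Cᵀ *ᵥ (WithLp.equiv 2 (Fin n → ℝ)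
      (y - (2 : ℝ)⁻¹ • (xstart + xgoal))) with hv_def
    set x : EuclideanSpace ℝ (Fin n) :=
      (WithLp.equiv 2 (Fin n → ℝ)).symm (fun j => (d j)⁻¹ * v j) with hx_def
    have hD : (Matrix.diagonal d) *ᵥ (WithLp.equiv 2 (Fin n → ℝ) x) = v := by
      funext j
      simp only [Matrix.mulVec_diagonal, hx_def, WithLp.equiv_apply,
        WithLp.equiv_symm_apply, WithLp.ofLp_toLp]
      rw [← mul_assoc, mul_inv_cancel₀ (hdne j), one_mul]
    have hTx : (WithLp.equiv 2 (Fin n → ℝ)).symm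
          (C.mulVec ((Matrix.diagonal d).mulVec (WithLp.equiv 2 (Fin n → ℝ) x)))
          + (2 : ℝ)⁻¹ • (xstart + xgoal) = y := by
      apply PiLp.ext
      intro i
      simp only [PiLp.add_apply, WithLp.equiv_symm_apply, WithLp.ofLp_toLp]
      rw [hD, hv_def, hCinv']
      simp only [WithLp.equiv_apply, PiLp.sub_apply, PiLp.smul_apply, PiLp.add_apply,
        smul_eq_mul]
      ring
    refine ⟨x, ?_, hTx⟩
    rw [mem_closedBall_zero_iff]
    apply (key x).mp
    rw [hTx]
    exact hy
end

section
/- With notation as above, if x_ball is uniformly distributed on the closed unit ball of ℝⁿ, then C L x_ball + x_c is uniformly distributed on the informed set X_f̂ = {x : ‖x_start − x‖ + ‖x − x_goal‖ ≤ c}. -/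
open MeasureTheory Metric Matrix

/-- Real ellipse characterization: sum of distances to the foci `±f` is at most `2a`
iff the point lies inside the ellipse. -/
lemma ellipse_aux {a b f u r2 : ℝ} (ha : 0 < a) (hb : 0 < b) (hf : 0 ≤ f)
    (habf : a ^ 2 = b ^ 2 + f ^ 2) (hr2 : 0 ≤ r2) :
    Real.sqrt ((u + f) ^ 2 + r2) + Real.sqrt ((u - f) ^ 2 + r2) ≤ 2 * a ↔
      b ^ 2 * u ^ 2 + a ^ 2 * r2 ≤ a ^ 2 * b ^ 2 := by
  have hp : (0:ℝ) ≤ (u + f) ^ 2 + r2 := by positivity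
  have hq : (0:ℝ) ≤ (u - f) ^ 2 + r2 := by positivity
  constructor
  · intro h
    set s := Real.sqrt ((u + f) ^ 2 + r2) with hs
    set t := Real.sqrt ((u - f) ^ 2 + r2) with ht
    have hs0 : 0 ≤ s := Real.sqrt_nonneg _
    have ht0 : 0 ≤ t := Real.sqrt_nonneg _
    have hs2 : s ^ 2 = (u + f) ^ 2 + r2 := Real.sq_sqrt hp
    have ht2 : t ^ 2 = (u - f) ^ 2 + r2 := Real.sq_sqrt hq
    have hsq : (s + t) ^ 2 ≤ (2 * a) ^ 2 := pow_le_pow_left₀ (by linarith) h 2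
    have h1 : 2 * (s * t) ≤ 4 * a ^ 2 - ((u + f) ^ 2 + r2) - ((u - f) ^ 2 + r2) := by
      nlinarith [hsq, hs2, ht2]
    have h2 : (2 * (s * t)) ^ 2 ≤
        (4 * a ^ 2 - ((u + f) ^ 2 + r2) - ((u - f) ^ 2 + r2)) ^ 2 :=
      pow_le_pow_left₀ (by positivity) h1 2
    have h3 : (s * t) ^ 2 = ((u + f) ^ 2 + r2) * ((u - f) ^ 2 + r2) := by
      rw [mul_pow, hs2, ht2]
    nlinarith [h2, h3, sq_nonneg a, sq_nonneg f]
  · intro h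
    have hu2 : u ^ 2 ≤ a ^ 2 := by nlinarith [mul_pos hb hb, mul_pos ha ha]
    have hfa : f ≤ a := by nlinarith [mul_pos hb hb]
    have hu1 : -a ≤ u := by nlinarith [sq_nonneg (u + a)]
    have hu1' : u ≤ a := by nlinarith [sq_nonneg (u - a)]
    have hA : 0 ≤ a ^ 2 + f * u := by
      nlinarith [mul_nonneg hf (by linarith : (0:ℝ) ≤ u + a),
        mul_nonneg (by linarith : (0:ℝ) ≤ a - f) ha.le]
    have hB : 0 ≤ a ^ 2 - f * u := by
      nlinarith [mul_nonneg hf (by linarith : (0:ℝ) ≤ a - u),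
        mul_nonneg (by linarith : (0:ℝ) ≤ a - f) ha.le]
    have key1 : Real.sqrt ((u + f) ^ 2 + r2) ≤ (a ^ 2 + f * u) / a := by
      have hnn : 0 ≤ (a ^ 2 + f * u) / a := div_nonneg hA ha.le
      rw [← Real.sqrt_sq hnn]
      apply Real.sqrt_le_sqrt
      rw [div_pow, le_div_iff₀ (by positivity)]
      nlinarith
    have key2 : Real.sqrt ((u - f) ^ 2 + r2) ≤ (a ^ 2 - f * u) / a := by
      have hnn : 0 ≤ (a ^ 2 - f * u) / a := div_nonneg hB ha.le
      rw [← Real.sqrt_sq hnn]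
      apply Real.sqrt_le_sqrt
      rw [div_pow, le_div_iff₀ (by positivity)]
      nlinarith
    have : (a ^ 2 + f * u) / a + (a ^ 2 - f * u) / a = 2 * a := by
      field_simp; ring
    linarith [key1, key2]

/-- An orthogonal matrix preserves the sum of squares of coordinates. -/
lemma sum_sq_mulVec {n : ℕ} {C : Matrix (Fin n) (Fin n) ℝ}
    (hC : C ∈ Matrix.orthogonalGroup (Fin n) ℝ) (u : Fin n → ℝ) :
    ∑ i, ((C *ᵥ u) i) ^ 2 = ∑ i, (u i) ^ 2 := by
  have h1 : star C * C = 1 := hC.1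
  have h2 : (C *ᵥ u) ⬝ᵥ (C *ᵥ u) = u ⬝ᵥ u := by
    rw [Matrix.dotProduct_mulVec, ← Matrix.mulVec_transpose, Matrix.mulVec_mulVec]
    have hT : Cᵀ = star C := by
      ext i j
      simp [Matrix.star_apply]
    rw [hT, h1, Matrix.one_mulVec]
  simpa [dotProduct, sq] using h2

set_option maxHeartbeats 1000000 in
/-- If `x_ball` is uniformly distributed on the closed unit ball of ℝⁿ, then
`C L x_ball + x_c` is uniformly distributed on the informed set
`X_f̂ = {x : ‖x_start − x‖ + ‖x − x_goal‖ ≤ c}`. -/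
theorem stmt_16 (n : ℕ) [NeZero n] (xstart xgoal : EuclideanSpace ℝ (Fin n)) (cmin c : ℝ)
    (hmin : cmin = ‖xgoal - xstart‖) (hpos : 0 < cmin) (hc : cmin < c)
    (C : Matrix (Fin n) (Fin n) ℝ) (hC : C ∈ Matrix.orthogonalGroup (Fin n) ℝ)
    (hdet : C.det = 1) (hcol : ∀ i, C i 0 = (xgoal i - xstart i) / cmin) :
    Measure.map
        (fun x : EuclideanSpace ℝ (Fin n) =>
          (WithLp.equiv 2 (Fin n → ℝ)).symm
            (C.mulVec ((Matrix.diagonal fun i : Fin n =>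
              if i = 0 then c / 2 else Real.sqrt (c ^ 2 - cmin ^ 2) / 2).mulVec
              (WithLp.equiv 2 (Fin n → ℝ) x)))
            + (2 : ℝ)⁻¹ • (xstart + xgoal))
        ((volume (closedBall (0 : EuclideanSpace ℝ (Fin n)) 1))⁻¹ •
          volume.restrict (closedBall (0 : EuclideanSpace ℝ (Fin n)) 1)) =
      (volume {x : EuclideanSpace ℝ (Fin n) | ‖xstart - x‖ + ‖x - xgoal‖ ≤ c})⁻¹ •
        volume.restrict {x : EuclideanSpace ℝ (Fin n) | ‖xstart - x‖ + ‖x - xgoal‖ ≤ c} := by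
  classical
  set a : ℝ := c / 2 with ha_def
  set f : ℝ := cmin / 2 with hf_def
  set b : ℝ := Real.sqrt (c ^ 2 - cmin ^ 2) / 2 with hb_def
  have hcpos : 0 < c := lt_trans hpos hc
  have ha : 0 < a := by positivity
  have hf : 0 ≤ f := by positivity
  have hsub : 0 < c ^ 2 - cmin ^ 2 := by nlinarith
  have hb : 0 < b := by
    rw [hb_def]
    have := Real.sqrt_pos.mpr hsub
    positivity
  have hb2 : b ^ 2 = (c ^ 2 - cmin ^ 2) / 4 := by
    rw [hb_def, div_pow, Real.sq_sqrt hsub.le]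
    norm_num
  have habf : a ^ 2 = b ^ 2 + f ^ 2 := by
    rw [ha_def, hf_def, hb2]; ring
  set D : Matrix (Fin n) (Fin n) ℝ :=
    Matrix.diagonal fun i : Fin n => if i = 0 then a else b with hD_def
  set L : EuclideanSpace ℝ (Fin n) →ₗ[ℝ] EuclideanSpace ℝ (Fin n) :=
    Matrix.toEuclideanLin (C * D) with hL_def
  set v : EuclideanSpace ℝ (Fin n) := (2 : ℝ)⁻¹ • (xstart + xgoal) with hv_def
  set S : Set (EuclideanSpace ℝ (Fin n)) :=
    {x | ‖xstart - x‖ + ‖x - xgoal‖ ≤ c} with hS_def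
  -- the map in the statement is `fun x => L x + v`
  have hφ : (fun x : EuclideanSpace ℝ (Fin n) =>
      (WithLp.equiv 2 (Fin n → ℝ)).symm
        (C.mulVec ((Matrix.diagonal fun i : Fin n =>
          if i = 0 then c / 2 else Real.sqrt (c ^ 2 - cmin ^ 2) / 2).mulVec
          (WithLp.equiv 2 (Fin n → ℝ) x)))
        + (2 : ℝ)⁻¹ • (xstart + xgoal)) = fun x => L x + v := by
    funext x
    rw [hL_def, Matrix.toEuclideanLin_apply, ← Matrix.mulVec_mulVec]
    rfl
  -- determinant of `L`
  have hdetD : D.det = ∏ i : Fin n, (if i = 0 then a else b) := by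
    rw [hD_def, Matrix.det_diagonal]
  have hdetDpos : 0 < D.det := by
    rw [hdetD]
    exact Finset.prod_pos fun i _ => by split <;> assumption
  have hdetL : LinearMap.det L = (C * D).det := by
    have : L = (WithLp.linearEquiv 2 ℝ (Fin n → ℝ)).symm.toLinearMap ∘ₗ
        (Matrix.toLin' (C * D)) ∘ₗ (WithLp.linearEquiv 2 ℝ (Fin n → ℝ)).toLinearMap := rfl
    rw [this]
    have := LinearMap.det_conj (Matrix.toLin' (C * D))
      (WithLp.linearEquiv 2 ℝ (Fin n → ℝ)).symm
    rw [LinearEquiv.symm_symm] at this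
    rw [this, LinearMap.det_toLin']
  have hdetLpos : 0 < LinearMap.det L := by
    rw [hdetL, Matrix.det_mul, hdet, one_mul]; exact hdetDpos
  have hdetLne : LinearMap.det L ≠ 0 := ne_of_gt hdetLpos
  -- measurability facts
  have hLcont : Continuous L := L.continuous_of_finiteDimensional
  have hφmeas : Measurable fun x : EuclideanSpace ℝ (Fin n) => L x + v :=
    (hLcont.add continuous_const).measurable
  have hSclosed : IsClosed S := by
    rw [hS_def]
    exact isClosed_le (by fun_prop) continuous_const
  have hSmeas : MeasurableSet S := hSclosed.measurableSet
  -- the key pointwise equivalence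
  have hiff : ∀ y : EuclideanSpace ℝ (Fin n), (L y + v ∈ S) ↔ y ∈ closedBall (0 : EuclideanSpace ℝ (Fin n)) 1 := by
    intro y
    set w : Fin n → ℝ := D *ᵥ (WithLp.equiv 2 (Fin n → ℝ) y) with hw_def
    have hw : ∀ i, w i = (if i = 0 then a else b) * y i := by
      intro i
      rw [hw_def, hD_def, Matrix.mulVec_diagonal]
      rfl
    set e0 : Fin n → ℝ := Pi.single (0 : Fin n) 1 with he0_def
    have hCe0 : ∀ i, (C *ᵥ e0) i = (xgoal i - xstart i) / cmin := by
      intro i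
      simp [he0_def, hcol i]
    -- first distance
    have hnorm1 : ‖xstart - (L y + v)‖ =
        Real.sqrt ((a * y 0 + f) ^ 2 + b ^ 2 * ∑ i ∈ Finset.univ.erase 0, (y i) ^ 2) := by
      have hcoord : ∀ i, (xstart - (L y + v)) i = -((C *ᵥ (w + f • e0)) i) := by
        intro i
        have h1 : (xstart - (L y + v)) i
            = xstart i - ((C *ᵥ w) i + 2⁻¹ * (xstart i + xgoal i)) := by
          simp [hL_def, hv_def, Matrix.toEuclideanLin_apply, ← Matrix.mulVec_mulVec,
            hw_def]
          ring
        have h2 : (C *ᵥ (w + f • e0)) i = (C *ᵥ w) i + f * ((xgoal i - xstart i) / cmin) := by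
          rw [Matrix.mulVec_add, Matrix.mulVec_smul]
          simp [hCe0 i]
        rw [h1, h2]
        field_simp [hf_def]
        ring
      rw [EuclideanSpace.norm_eq]
      congr 1
      rw [show ∑ i ∈ Finset.univ.erase 0, (y i) ^ 2
            = ∑ i ∈ Finset.univ.erase 0, (y i) ^ 2 from rfl]
      have hsum : ∑ i, ‖(xstart - (L y + v)) i‖ ^ 2 = ∑ i, ((w + f • e0) i) ^ 2 := by
        calc ∑ i, ‖(xstart - (L y + v)) i‖ ^ 2
            = ∑ i, ((C *ᵥ (w + f • e0)) i) ^ 2 := by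
              refine Finset.sum_congr rfl fun i _ => ?_
              rw [Real.norm_eq_abs, sq_abs, hcoord i, neg_pow, ]
              ring
          _ = ∑ i, ((w + f • e0) i) ^ 2 := sum_sq_mulVec hC _
      rw [hsum, ← Finset.sum_erase_add _ _ (Finset.mem_univ (0 : Fin n))]
      have h0 : ((w + f • e0) 0) ^ 2 = (a * y 0 + f) ^ 2 := by
        simp [hw 0, he0_def, Pi.single_eq_same]
      have hrest : ∑ i ∈ Finset.univ.erase 0, ((w + f • e0) i) ^ 2
          = b ^ 2 * ∑ i ∈ Finset.univ.erase 0, (y i) ^ 2 := by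
        rw [Finset.mul_sum]
        refine Finset.sum_congr rfl fun i hi => ?_
        have hine : i ≠ 0 := Finset.ne_of_mem_erase hi
        simp [hw i, he0_def, Pi.single_eq_of_ne hine, hine]
        ring
      rw [h0, hrest]
      ring
    -- second distance
    have hnorm2 : ‖(L y + v) - xgoal‖ =
        Real.sqrt ((a * y 0 - f) ^ 2 + b ^ 2 * ∑ i ∈ Finset.univ.erase 0, (y i) ^ 2) := by
      have hcoord : ∀ i, ((L y + v) - xgoal) i = (C *ᵥ (w - f • e0)) i := by
        intro i
        have h1 : ((L y + v) - xgoal) i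
            = ((C *ᵥ w) i + 2⁻¹ * (xstart i + xgoal i)) - xgoal i := by
          simp [hL_def, hv_def, Matrix.toEuclideanLin_apply, ← Matrix.mulVec_mulVec,
            hw_def]
          ring
        have h2 : (C *ᵥ (w - f • e0)) i = (C *ᵥ w) i - f * ((xgoal i - xstart i) / cmin) := by
          rw [Matrix.mulVec_sub, Matrix.mulVec_smul]
          simp [hCe0 i]
        rw [h1, h2]
        field_simp [hf_def]
        ring
      rw [EuclideanSpace.norm_eq]
      congr 1
      have hsum : ∑ i, ‖((L y + v) - xgoal) i‖ ^ 2 = ∑ i, ((w - f • e0) i) ^ 2 := by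
        calc ∑ i, ‖((L y + v) - xgoal) i‖ ^ 2
            = ∑ i, ((C *ᵥ (w - f • e0)) i) ^ 2 := by
              refine Finset.sum_congr rfl fun i _ => ?_
              rw [Real.norm_eq_abs, sq_abs, hcoord i]
          _ = ∑ i, ((w - f • e0) i) ^ 2 := sum_sq_mulVec hC _
      rw [hsum, ← Finset.sum_erase_add _ _ (Finset.mem_univ (0 : Fin n))]
      have h0 : ((w - f • e0) 0) ^ 2 = (a * y 0 - f) ^ 2 := by
        simp [hw 0, he0_def, Pi.single_eq_same]
      have hrest : ∑ i ∈ Finset.univ.erase 0, ((w - f • e0) i) ^ 2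
          = b ^ 2 * ∑ i ∈ Finset.univ.erase 0, (y i) ^ 2 := by
        rw [Finset.mul_sum]
        refine Finset.sum_congr rfl fun i hi => ?_
        have hine : i ≠ 0 := Finset.ne_of_mem_erase hi
        simp [hw i, he0_def, Pi.single_eq_of_ne hine, hine]
        ring
      rw [h0, hrest]
      ring
    have hr2 : 0 ≤ b ^ 2 * ∑ i ∈ Finset.univ.erase 0, (y i) ^ 2 := by positivity
    have hsum_nonneg : 0 ≤ ∑ i ∈ Finset.univ.erase 0, (y i) ^ 2 := by positivity
    have hcc : c = 2 * a := by rw [ha_def]; ring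
    constructor
    · intro hy
      have hle : ‖xstart - (L y + v)‖ + ‖(L y + v) - xgoal‖ ≤ c := hy
      rw [hnorm1, hnorm2, hcc] at hle
      have := (ellipse_aux ha hb hf habf hr2).mp hle
      -- b² u² + a² r2 ≤ a² b²  with u = a y 0
      rw [mem_closedBall, dist_zero_right, ← Real.sqrt_one]
      rw [show ‖y‖ = Real.sqrt (∑ i, (y i) ^ 2) by
        rw [EuclideanSpace.norm_eq]
        congr 1
        exact Finset.sum_congr rfl fun i _ => by rw [Real.norm_eq_abs, sq_abs]]
      rw [Real.sqrt_le_sqrt_iff (by norm_num)]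
      rw [← Finset.sum_erase_add _ _ (Finset.mem_univ (0 : Fin n))]
      nlinarith [this, sq_nonneg (y 0), mul_pos (mul_pos ha ha) (mul_pos hb hb)]
    · intro hy
      have h1 : ‖y‖ ≤ 1 := by
        rw [mem_closedBall, dist_zero_right] at hy; exact hy
      have h2 : ∑ i, (y i) ^ 2 ≤ 1 := by
        have h3 : Real.sqrt (∑ i, (y i) ^ 2) ≤ 1 := by
          rw [show Real.sqrt (∑ i, (y i) ^ 2) = ‖y‖ by
            rw [EuclideanSpace.norm_eq]
            congr 1
            exact Finset.sum_congr rfl fun i _ => by rw [Real.norm_eq_abs, sq_abs]]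
          exact h1
        nlinarith [Real.sq_sqrt (show (0:ℝ) ≤ ∑ i, (y i) ^ 2 by positivity),
          Real.sqrt_nonneg (∑ i, (y i) ^ 2)]
      have h4 : ∑ i ∈ Finset.univ.erase 0, (y i) ^ 2 + (y 0) ^ 2 ≤ 1 := by
        rw [Finset.sum_erase_add _ _ (Finset.mem_univ (0 : Fin n))]
        exact h2
      have key : b ^ 2 * (a * y 0) ^ 2 + a ^ 2 *
          (b ^ 2 * ∑ i ∈ Finset.univ.erase 0, (y i) ^ 2) ≤ a ^ 2 * b ^ 2 := by
        nlinarith [mul_pos (mul_pos ha ha) (mul_pos hb hb)]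
      have := (ellipse_aux ha hb hf habf hr2).mpr key
      show ‖xstart - (L y + v)‖ + ‖(L y + v) - xgoal‖ ≤ c
      rw [hnorm1, hnorm2, hcc]
      exact this
  -- the unit ball is the preimage of `S`
  have hball : closedBall (0 : EuclideanSpace ℝ (Fin n)) 1
      = (fun x => L x + v) ⁻¹' S := by
    ext y
    exact (hiff y).symm
  -- pushforward of volume
  have hmap : Measure.map (fun x => L x + v) volume
      = ENNReal.ofReal |(LinearMap.det L)⁻¹| • volume := by
    have hcomp : (fun x : EuclideanSpace ℝ (Fin n) => L x + v)
        = (fun z => z + v) ∘ L := rfl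
    rw [hcomp, ← Measure.map_map (measurable_add_const v) hLcont.measurable,
      Measure.map_linearMap_addHaar_eq_smul_addHaar volume hdetLne,
      Measure.map_smul, map_add_right_eq_self]
  set k : ENNReal := ENNReal.ofReal |(LinearMap.det L)⁻¹| with hk_def
  have hk0 : k ≠ 0 := by
    rw [hk_def]
    simp only [ne_eq, ENNReal.ofReal_eq_zero, not_le]
    rw [abs_pos]
    exact inv_ne_zero hdetLne
  have hktop : k ≠ ⊤ := ENNReal.ofReal_ne_top
  have hvolpre : volume ((fun x => L x + v) ⁻¹' S) = k * volume S := by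
    rw [← Measure.map_apply hφmeas hSmeas, hmap, Measure.smul_apply, smul_eq_mul]
  rw [hφ, hball, hvolpre, Measure.map_smul,
    ← Measure.restrict_map hφmeas hSmeas, hmap, Measure.restrict_smul, smul_smul]
  congr 1
  rw [ENNReal.mul_inv (Or.inl hk0) (Or.inl hktop)]
  rw [mul_comm k⁻¹ _, mul_assoc, ENNReal.inv_mul_cancel hk0 hktop, mul_one]
end
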